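/- Let 𝒳 ⊂ ℝ^d be a measurable set with Lebesgue measure vol(𝒳) satisfying 0 < vol(𝒳) < ∞, let T be a positive integer, η ∈ [0,1/2], and γ > 0. Let h⁽¹⁾,…,h⁽ᵀ⁾ : 𝒳 → [0,1] be measurable, let p⁽⁰⁾(x) = 1/vol(𝒳) for all x ∈ 𝒳, and for each t define p⁽ᵗ⁾(x) = p⁽ᵗ⁻¹⁾(x)(1 − η h⁽ᵗ⁾(x)) / ∫_𝒳 p⁽ᵗ⁻¹⁾(y)(1 − η h⁽ᵗ⁾(y)) dy. Assume ∫_𝒳 h⁽ᵗ⁾(x) p⁽ᵗ⁻¹⁾(x) dx ≥ γ for every t ∈ {1,…,T}, and set M_T(x) = Σ_{t=1}^T h⁽ᵗ⁾(x). Then for every x ∈ 𝒳: log p⁽ᵀ⁾(x) ≥ (γη/(η+2))·( T − ((η+1)(η+2)/γ)·M_T(x) ) − log(2·vol(𝒳)). -/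

import Mathlib

open MeasureTheory

lemma log_one_sub_ge {z : ℝ} (h0 : 0 ≤ z) (h1 : z ≤ 1/2) :
    -(z + z^2) ≤ Real.log (1 - z) := by
  have hz : (0:ℝ) < 1 - z := by linarith
  rw [Real.le_log_iff_exp_le hz]
  have hw : 0 ≤ z + z^2 := by positivity
  have hq : 1 + (z + z^2) + (z + z^2)^2/2 ≤ Real.exp (z + z^2) :=
    Real.quadratic_le_exp_of_nonneg hw
  have hpos : 0 < Real.exp (z + z^2) := Real.exp_pos _
  have hpoly : 0 ≤ z^2 * (1 - z - z^2 - z^3) := by nlinarith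
  calc Real.exp (-(z + z^2)) = 1 / Real.exp (z + z^2) := by
        rw [Real.exp_neg, one_div]
    _ ≤ 1 - z := by
        rw [div_le_iff₀ hpos]
        nlinarith [mul_le_mul_of_nonneg_left hq hz.le]

/-- continuous cutting-plane bound, Lemma 1 of the supplement:
for the continuous multiplicative-weights process
`p (t+1) x ∝ p t x * (1 − η h (t+1) x)` started from the uniform density on a
measurable `𝒳 ⊂ ℝ^d` with `0 < vol(𝒳) < ∞`, if each round has coverage
`∫_𝒳 h (t+1) x · p t x dx ≥ γ`, then for every `x ∈ 𝒳`,
`log p T x ≥ (γη/(η+2))(T − ((η+1)(η+2)/γ) M_T(x)) − log(2 vol(𝒳))`. -/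
theorem stmt5 {d : ℕ}
    (X : Set (EuclideanSpace ℝ (Fin d))) (hXmeas : MeasurableSet X)
    (hXpos : 0 < volume X) (hXfin : volume X ≠ ⊤)
    (T : ℕ) (hT : 0 < T)
    (η γ : ℝ) (hη : η ∈ Set.Icc (0 : ℝ) (1 / 2)) (hγ : 0 < γ)
    (h : ℕ → EuclideanSpace ℝ (Fin d) → ℝ)
    (hhmeas : ∀ t, Measurable (h t))
    (hh : ∀ t x, x ∈ X → h t x ∈ Set.Icc (0 : ℝ) 1)
    (p : ℕ → EuclideanSpace ℝ (Fin d) → ℝ)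
    (hpint : ∀ t, IntegrableOn (p t) X volume)
    (hp0 : ∀ x ∈ X, p 0 x = 1 / (volume X).toReal)
    (hrec : ∀ t < T, ∀ x ∈ X, p (t + 1) x =
      p t x * (1 - η * h (t + 1) x) /
        ∫ y in X, p t y * (1 - η * h (t + 1) y))
    (hcov : ∀ t < T, γ ≤ ∫ x in X, h (t + 1) x * p t x) :
    ∀ x ∈ X, Real.log (p T x)
      ≥ γ * η / (η + 2) *
          ((T : ℝ) - (η + 1) * (η + 2) / γ * (∑ t ∈ Finset.Icc 1 T, h t x))
        - Real.log (2 * (volume X).toReal) := by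
  obtain ⟨hη0, hη2⟩ := hη
  set V : ℝ := (volume X).toReal with hV
  have hVpos : 0 < V := ENNReal.toReal_pos hXpos.ne' hXfin
  -- main induction
  have key : ∀ t, t ≤ T → (∀ x ∈ X, 0 < p t x) ∧ (∫ x in X, p t x = 1) ∧
      ∀ x ∈ X, (t : ℝ) * (γ * η / (η + 2)) -
        η * (η + 1) * (∑ s ∈ Finset.Icc 1 t, h s x) - Real.log V
        ≤ Real.log (p t x) := by
    intro t
    induction t with
    | zero =>
      intro _
      refine ⟨fun x hx => by rw [hp0 x hx]; positivity, ?_, ?_⟩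
      · rw [setIntegral_congr_fun hXmeas (fun x hx => hp0 x hx),
          setIntegral_const, smul_eq_mul]
        field_simp
        rfl
      · intro x hx
        rw [hp0 x hx, one_div, Real.log_inv]
        simp
    | succ t ih =>
      intro hle
      have ht : t < T := hle
      obtain ⟨hApos, hB, hC⟩ := ih (Nat.le_of_succ_le hle)
      -- integrability facts
      have hbound1 : ∀ᵐ y ∂(volume.restrict X), ‖1 - η * h (t+1) y‖ ≤ 1 := by
        filter_upwards [ae_restrict_mem hXmeas] with y hy
        obtain ⟨hh0, hh1⟩ := hh (t+1) y hy
        rw [Real.norm_eq_abs, abs_le]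
        constructor <;> nlinarith
      have hmeas1 : AEStronglyMeasurable (fun y => 1 - η * h (t+1) y)
          (volume.restrict X) :=
        (measurable_const.sub ((hhmeas (t+1)).const_mul η)).aestronglyMeasurable
      have hint1 : IntegrableOn (fun y => (1 - η * h (t+1) y) * p t y) X volume :=
        (hpint t).bdd_mul hmeas1 hbound1
      have hboundh : ∀ᵐ y ∂(volume.restrict X), ‖h (t+1) y‖ ≤ 1 := by
        filter_upwards [ae_restrict_mem hXmeas] with y hy
        obtain ⟨hh0, hh1⟩ := hh (t+1) y hy
        rw [Real.norm_eq_abs, abs_le]; constructor <;> linarith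
      have hinth : IntegrableOn (fun y => h (t+1) y * p t y) X volume :=
        (hpint t).bdd_mul (hhmeas (t+1)).aestronglyMeasurable hboundh
      set I : ℝ := ∫ y in X, h (t+1) y * p t y with hI
      have hIγ : γ ≤ I := hcov t ht
      have hIle : I ≤ 1 := by
        rw [hI, ← hB]
        refine setIntegral_mono_on hinth (hpint t) hXmeas ?_
        intro y hy
        obtain ⟨hh0, hh1⟩ := hh (t+1) y hy
        nlinarith [(hApos y hy).le]
      set Z : ℝ := ∫ y in X, p t y * (1 - η * h (t+1) y) with hZ
      have hZeq : Z = 1 - η * I := by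
        rw [hZ, hI]
        have : ∀ y, p t y * (1 - η * h (t+1) y)
            = p t y - η * (h (t+1) y * p t y) := fun y => by ring
        simp_rw [this]
        rw [integral_sub (hpint t) (hinth.const_mul η), integral_const_mul, hB]
      have hZpos : (0:ℝ) < Z := by rw [hZeq]; nlinarith
      have hZle : Z ≤ 1 - η * γ := by rw [hZeq]; nlinarith
      have hApos' : ∀ x ∈ X, 0 < p (t+1) x := by
        intro x hx
        rw [hrec t ht x hx, ← hZ]
        obtain ⟨hh0, hh1⟩ := hh (t+1) x hx
        have : 0 < 1 - η * h (t+1) x := by nlinarith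
        exact div_pos (mul_pos (hApos x hx) this) hZpos
      refine ⟨hApos', ?_, ?_⟩
      · rw [setIntegral_congr_fun hXmeas (fun x hx => hrec t ht x hx)]
        simp_rw [← hZ, div_eq_mul_inv]
        rw [integral_mul_const, ← hZ, mul_inv_cancel₀ hZpos.ne']
      · intro x hx
        obtain ⟨hh0, hh1⟩ := hh (t+1) x hx
        have hfac : (0:ℝ) < 1 - η * h (t+1) x := by nlinarith
        have hlog : Real.log (p (t+1) x) = Real.log (p t x)
            + Real.log (1 - η * h (t+1) x) - Real.log Z := by
          rw [hrec t ht x hx, ← hZ, Real.log_div (mul_pos (hApos x hx) hfac).ne' hZpos.ne',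
            Real.log_mul (hApos x hx).ne' hfac.ne']
        -- bound on the factor
        have hz1 : η * h (t+1) x ≤ 1/2 := by nlinarith
        have hfacbd : -(η * (η+1) * h (t+1) x) ≤ Real.log (1 - η * h (t+1) x) := by
          have := log_one_sub_ge (z := η * h (t+1) x) (by positivity) hz1
          nlinarith [this, mul_nonneg (mul_nonneg hη0 hη0)
              (mul_nonneg hh0 (by linarith : (0:ℝ) ≤ 1 - h (t+1) x))]
        -- bound on Z
        have hZbd : Real.log Z ≤ -(γ * η / (η + 2)) := by
          have h1 : Real.log Z ≤ Real.log (1 - η * γ) :=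
            Real.log_le_log hZpos hZle
          have h2 : Real.log (1 - η * γ) ≤ -(η * γ) := by
            have := Real.log_le_sub_one_of_pos (x := 1 - η * γ)
              (by linarith : (0:ℝ) < 1 - η * γ)
            linarith
          have h3 : γ * η / (η + 2) ≤ η * γ := by
            rw [mul_comm γ η]
            exact div_le_self (by positivity) (by linarith)
          linarith
        have hsum : (∑ s ∈ Finset.Icc 1 (t+1), h s x)
            = (∑ s ∈ Finset.Icc 1 t, h s x) + h (t+1) x :=
          Finset.sum_Icc_succ_top (Nat.one_le_iff_ne_zero.mpr (Nat.succ_ne_zero t)) _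
        have hCx := hC x hx
        rw [hlog, hsum]
        push_cast
        linarith
  obtain ⟨_, _, hC⟩ := key T le_rfl
  intro x hx
  have hCx := hC x hx
  have hlog2 : Real.log V ≤ Real.log (2 * V) :=
    Real.log_le_log hVpos (by linarith)
  have halg : γ * η / (η + 2) *
      ((T : ℝ) - (η + 1) * (η + 2) / γ * (∑ t ∈ Finset.Icc 1 T, h t x))
      = (T : ℝ) * (γ * η / (η + 2)) - η * (η + 1) * (∑ t ∈ Finset.Icc 1 T, h t x) := by
    field_simp
  rw [ge_iff_le, halg]
  linarith
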